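/- Work over the alphabet {a, b} and the tagged alphabet {a, b} × {1, 2}, and let tag₁ and tag₂ be the letter-to-letter maps on words sending each letter x to (x, 1), respectively (x, 2). Let K₀ be the set of words over {a, b} × {1, 2} that are concatenations of the two-letter blocks (a,1)(a,2) and (b,1)(b,2). Then for every word w over {a, b} and every tuple (u₁, …, uₘ) of words over {a, b}: w ∈ ⧢(u₁, …, uₘ) if and only if ⧢(tag₁(w), tag₂(u₁), …, tag₂(uₘ)) ∩ K₀ ≠ ∅. -/

import Mathlib

namespace CTS

/-- Shuffle of two words: `ε ⧢ v = {v}`, `u ⧢ ε = {u}`,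
`(x·u) ⧢ (y·v) = x·(u ⧢ y·v) ∪ y·(x·u ⧢ v)`. -/
def shuffle {α : Type*} : List α → List α → Set (List α)
  | [], v => {v}
  | u, [] => {u}
  | x :: u, y :: v =>
      (List.cons x) '' shuffle u (y :: v) ∪ (List.cons y) '' shuffle (x :: u) v
  termination_by u v => u.length + v.length

/-- Shuffle of a tuple of words: `⧢() = {ε}` and
`⧢(w₁, …, wₘ₊₁) = ⋃_{v ∈ ⧢(w₁, …, wₘ)} v ⧢ wₘ₊₁`. -/
def Shuffles {α : Type*} (ws : List (List α)) : Set (List α) :=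
  ws.foldl (fun S w => ⋃ v ∈ S, shuffle v w) {[]}

/-- `wpow u n` is the `n`-fold concatenation `u^n` of the word `u`. -/
def wpow {α : Type*} (u : List α) : ℕ → List α
  | 0 => []
  | n + 1 => u ++ wpow u n

/-- `star u = {u^n : n ∈ ℕ}`. -/
def star {α : Type*} (u : List α) : Set (List α) := {w | ∃ n, w = wpow u n}

/-- Words that are (possibly empty) concatenations of blocks from `S`. -/
def ConcatsOf {α : Type*} (S : Set (List α)) : Set (List α) :=
  {w | ∃ L : List (List α), (∀ u ∈ L, u ∈ S) ∧ w = L.flatten}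

/-- The two-letter alphabet `{a, b}`. -/
inductive AB : Type
  | a : AB
  | b : AB
deriving DecidableEq

/-- Tag each letter of a word with subscript 1 (represented by `0 : Fin 2`). -/
def tag1 (w : List AB) : List (AB × Fin 2) := w.map (fun x => (x, (0 : Fin 2)))

/-- Tag each letter of a word with subscript 2 (represented by `1 : Fin 2`). -/
def tag2 (w : List AB) : List (AB × Fin 2) := w.map (fun x => (x, (1 : Fin 2)))

/-- `K₀`: concatenations of the blocks `(a,1)(a,2)` and `(b,1)(b,2)`. -/
def K0 : Set (List (AB × Fin 2)) :=
  ConcatsOf {[(AB.a, (0 : Fin 2)), (AB.a, (1 : Fin 2))],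
             [(AB.b, (0 : Fin 2)), (AB.b, (1 : Fin 2))]}

lemma shuffle_nil_left {α : Type*} (v : List α) : shuffle [] v = {v} := by
  cases v <;> simp [shuffle]

lemma shuffle_nil_right {α : Type*} (u : List α) : shuffle u [] = {u} := by
  cases u <;> simp [shuffle]

lemma shuffle_cons_cons {α : Type*} (x y : α) (u v : List α) :
    shuffle (x::u) (y::v)
      = (List.cons x) '' shuffle u (y::v) ∪ (List.cons y) '' shuffle (x::u) v := by
  rw [shuffle]

lemma nil_mem_shuffle {α : Type*} {u v : List α} (h : [] ∈ shuffle u v) :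
    u = [] ∧ v = [] := by
  cases u with
  | nil => rw [shuffle_nil_left] at h; exact ⟨rfl, h.symm⟩
  | cons x u =>
    cases v with
    | nil => rw [shuffle_nil_right] at h; exact absurd h.symm (by simp)
    | cons y v =>
      rw [shuffle_cons_cons] at h
      rcases h with ⟨z, _, hz⟩ | ⟨z, _, hz⟩ <;> simp at hz

lemma shuffle_cons_left {α : Type*} {z u v : List α} (x : α) (h : z ∈ shuffle u v) :
    x :: z ∈ shuffle (x :: u) v := by
  cases v with
  | nil => rw [shuffle_nil_right] at h ⊢; simp_all
  | cons y v => rw [shuffle_cons_cons]; exact Or.inl ⟨z, h, rfl⟩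

lemma shuffle_cons_right {α : Type*} {z u v : List α} (y : α) (h : z ∈ shuffle u v) :
    y :: z ∈ shuffle u (y :: v) := by
  cases u with
  | nil => rw [shuffle_nil_left] at h ⊢; simp_all
  | cons x u => rw [shuffle_cons_cons]; exact Or.inr ⟨z, h, rfl⟩

lemma shuffle_cons_inv {α : Type*} {c : α} {s u v : List α} (h : c :: s ∈ shuffle u v) :
    (∃ u', u = c :: u' ∧ s ∈ shuffle u' v) ∨ (∃ v', v = c :: v' ∧ s ∈ shuffle u v') := by
  cases u with
  | nil =>
    rw [shuffle_nil_left] at h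
    rcases h.symm with rfl
    exact Or.inr ⟨s, rfl, by rw [shuffle_nil_left]; rfl⟩
  | cons x u =>
    cases v with
    | nil =>
      rw [shuffle_nil_right] at h
      have h' : c :: s = x :: u := h
      obtain ⟨rfl, rfl⟩ : c = x ∧ s = u := by simp_all
      exact Or.inl ⟨_, rfl, by rw [shuffle_nil_right]; rfl⟩
    | cons y v =>
      rw [shuffle_cons_cons] at h
      rcases h with ⟨z, hz, hze⟩ | ⟨z, hz, hze⟩
      · obtain ⟨rfl, rfl⟩ : c = x ∧ z = s := by
          have := hze; simp only [List.cons.injEq] at this; tauto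
        exact Or.inl ⟨u, rfl, hz⟩
      · obtain ⟨rfl, rfl⟩ : c = y ∧ z = s := by
          have := hze; simp only [List.cons.injEq] at this; tauto
        exact Or.inr ⟨v, rfl, hz⟩

lemma filter_mem_shuffle {α : Type*} (p : α → Bool) :
    ∀ (z : List α) {u v : List α}, z ∈ shuffle u v →
      z.filter p ∈ shuffle (u.filter p) (v.filter p) := by
  intro z
  induction z with
  | nil =>
    intro u v h
    obtain ⟨rfl, rfl⟩ := nil_mem_shuffle h
    simp [shuffle_nil_left]
  | cons c z ih =>
    intro u v h
    rcases shuffle_cons_inv h with ⟨u', rfl, hs⟩ | ⟨v', rfl, hs⟩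
    · by_cases hp : p c
      · simpa [List.filter_cons, hp] using shuffle_cons_left c (ih hs)
      · simpa [List.filter_cons, hp] using ih hs
    · by_cases hp : p c
      · simpa [List.filter_cons, hp] using shuffle_cons_right c (ih hs)
      · simpa [List.filter_cons, hp] using ih hs

lemma map_mem_shuffle {α β : Type*} (f : α → β) :
    ∀ (z : List α) {u v : List α}, z ∈ shuffle u v →
      z.map f ∈ shuffle (u.map f) (v.map f) := by
  intro z
  induction z with
  | nil =>
    intro u v h
    obtain ⟨rfl, rfl⟩ := nil_mem_shuffle h
    simp [shuffle_nil_left]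
  | cons c z ih =>
    intro u v h
    rcases shuffle_cons_inv h with ⟨u', rfl, hs⟩ | ⟨v', rfl, hs⟩
    · simpa using shuffle_cons_left (f c) (ih hs)
    · simpa using shuffle_cons_right (f c) (ih hs)

/-- the "unshuffle" lemma -/
lemma unshuffle {α : Type*} (p : α → Bool) :
    ∀ (z : List α) {v' t : List α}, (∀ c ∈ t, p c = false) →
      z.filter (fun c => !p c) ∈ shuffle v' t →
      ∃ v, v.filter p = z.filter p ∧ v.filter (fun c => !p c) = v' ∧ z ∈ shuffle v t := by
  intro z
  induction z with
  | nil =>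
    intro v' t _ h
    simp only [List.filter_nil] at h
    obtain ⟨rfl, rfl⟩ := nil_mem_shuffle h
    exact ⟨[], rfl, rfl, by rw [shuffle_nil_left]; rfl⟩
  | cons c z ih =>
    intro v' t ht h
    by_cases hp : p c
    · rw [List.filter_cons_of_neg (by simp [hp])] at h
      obtain ⟨v, hv1, hv2, hv3⟩ := ih ht h
      exact ⟨c :: v, by simp [List.filter_cons, hp, hv1],
        by simp [List.filter_cons, hp, hv2], shuffle_cons_left c hv3⟩
    · rw [List.filter_cons_of_pos (by simp [hp])] at h
      rcases shuffle_cons_inv h with ⟨u', rfl, hs⟩ | ⟨t', rfl, hs⟩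
      · obtain ⟨v, hv1, hv2, hv3⟩ := ih ht hs
        exact ⟨c :: v, by simp [List.filter_cons, hp, hv1],
          by simp [List.filter_cons, hp, hv2], shuffle_cons_left c hv3⟩
      · obtain ⟨v, hv1, hv2, hv3⟩ := ih (fun c hc => ht c (List.mem_cons_of_mem _ hc)) hs
        exact ⟨v, by simp [List.filter_cons, hp, hv1],
          hv2, shuffle_cons_right c hv3⟩

lemma Shuffles_concat {α : Type*} (ws : List (List α)) (t : List α) :
    Shuffles (ws ++ [t]) = ⋃ v ∈ Shuffles ws, shuffle v t := by
  simp [Shuffles, List.foldl_append]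

lemma Shuffles_singleton {α : Type*} (u : List α) : Shuffles [u] = {u} := by
  have : Shuffles [u] = ⋃ v ∈ (Shuffles ([] : List (List α))), shuffle v u :=
    Shuffles_concat [] u
  rw [this]
  simp [Shuffles, shuffle_nil_left]

lemma map_mem_Shuffles {α β : Type*} (f : α → β) (ws : List (List α)) :
    ∀ z ∈ Shuffles ws, z.map f ∈ Shuffles (ws.map (List.map f)) := by
  induction ws using List.reverseRecOn with
  | nil => intro z hz; simp only [Shuffles, List.foldl_nil, Set.mem_singleton_iff] at hz ⊢; simp [hz]
  | append_singleton ws t ih =>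
    intro z hz
    rw [Shuffles_concat] at hz
    simp only [Set.mem_iUnion] at hz
    obtain ⟨v, hv, hzv⟩ := hz
    rw [List.map_append, show List.map (List.map f) [t] = [List.map f t] from rfl,
      Shuffles_concat]
    simp only [Set.mem_iUnion]
    exact ⟨v.map f, ih v hv, map_mem_shuffle f z hzv⟩

lemma Shuffles_filter {α : Type*} (p : α → Bool) (u : List α) (hu : ∀ c ∈ u, p c = true)
    (ws : List (List α)) (hws : ∀ t ∈ ws, ∀ c ∈ t, p c = false) (z : List α) :
    z ∈ Shuffles (u :: ws) ↔
      z.filter p = u ∧ z.filter (fun c => !p c) ∈ Shuffles ws := by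
  induction ws using List.reverseRecOn generalizing z with
  | nil =>
    rw [Shuffles_singleton]
    constructor
    · intro hz
      have hz' : z = u := hz
      subst hz'
      refine ⟨List.filter_eq_self.2 (by simpa using hu), ?_⟩
      have h0 : z.filter (fun c => !p c) = [] := by
        rw [List.filter_eq_nil_iff]; intro c hc; simp [hu c hc]
      simp only [Shuffles, List.foldl_nil, Set.mem_singleton_iff]
      exact h0
    · rintro ⟨h1, h2⟩
      simp only [Shuffles, List.foldl_nil, Set.mem_singleton_iff] at h2
      have : z.filter p = z := List.filter_eq_self.2 (by
        intro c hc
        by_contra hpc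
        have : c ∈ z.filter (fun c => !p c) := List.mem_filter.2 ⟨hc, by simp_all⟩
        rw [h2] at this; simp at this)
      rw [this] at h1; exact h1.symm ▸ rfl
  | append_singleton ws t ih =>
    have hws' : ∀ t' ∈ ws, ∀ c ∈ t', p c = false := fun t' ht' => hws t' (by simp [ht'])
    have htt : ∀ c ∈ t, p c = false := hws t (by simp)
    rw [show u :: (ws ++ [t]) = (u :: ws) ++ [t] from rfl, Shuffles_concat, Shuffles_concat]
    simp only [Set.mem_iUnion]
    constructor
    · rintro ⟨v, hv, hzv⟩
      obtain ⟨hv1, hv2⟩ := (ih hws' v).1 hv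
      have h1 := filter_mem_shuffle p z hzv
      have h2 := filter_mem_shuffle (fun c => !p c) z hzv
      have ht1 : t.filter p = [] := List.filter_eq_nil_iff.2 (by simpa using htt)
      have ht2 : t.filter (fun c => !p c) = t := List.filter_eq_self.2 (by
        intro c hc; simp [htt c hc])
      rw [ht1, shuffle_nil_right] at h1
      rw [ht2] at h2
      refine ⟨by rw [h1, hv1], ⟨v.filter (fun c => !p c), hv2, h2⟩⟩
    · rintro ⟨h1, v', hv', hzv'⟩
      obtain ⟨v, hfp, hfnp, hzv⟩ := unshuffle p z htt hzv'
      exact ⟨v, (ih hws' v).2 ⟨by rw [hfp, h1], hfnp ▸ hv'⟩, hzv⟩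


def tg : AB × Fin 2 → Bool := fun c => decide (c.2 = 0)

def inter (w : List AB) : List (AB × Fin 2) :=
  (w.map fun x => [(x, (0 : Fin 2)), (x, (1 : Fin 2))]).flatten

lemma inter_filter1 (w : List AB) : (inter w).filter tg = tag1 w := by
  induction w with
  | nil => rfl
  | cons x w ih => simp [inter, tag1, List.filter_cons, tg] at ih ⊢; exact ih

lemma inter_filter2 (w : List AB) : (inter w).filter (fun c => !tg c) = tag2 w := by
  induction w with
  | nil => rfl
  | cons x w ih => simp [inter, tag2, List.filter_cons, tg] at ih ⊢; exact ih

lemma inter_mem_K0 (w : List AB) : inter w ∈ K0 := by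
  refine ⟨w.map fun x => [(x, (0 : Fin 2)), (x, (1 : Fin 2))], ?_, rfl⟩
  intro u hu
  simp only [List.mem_map] at hu
  obtain ⟨x, _, rfl⟩ := hu
  cases x
  · exact Or.inl rfl
  · exact Or.inr rfl

lemma K0_fst {z : List (AB × Fin 2)} (hz : z ∈ K0) :
    (z.filter tg).map Prod.fst = (z.filter (fun c => !tg c)).map Prod.fst := by
  obtain ⟨L, hL, rfl⟩ := hz
  induction L with
  | nil => rfl
  | cons u L ih =>
    have hu := hL u (by simp)
    have ih' := ih (fun u hu => hL u (List.mem_cons_of_mem _ hu))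
    rcases hu with rfl | rfl <;>
      simpa [List.filter_cons, tg] using ih'


/-- `w ∈ ⧢(u₁, …, uₘ)` iff `⧢(tag₁(w), tag₂(u₁), …, tag₂(uₘ)) ∩ K₀ ≠ ∅`. -/
theorem stmt1 (w : List AB) (us : List (List AB)) :
    w ∈ Shuffles us ↔ (Shuffles (tag1 w :: us.map tag2) ∩ K0).Nonempty := by
  have hu : ∀ c ∈ tag1 w, tg c = true := by
    intro c hc; simp only [tag1, List.mem_map] at hc
    obtain ⟨x, _, rfl⟩ := hc; rfl
  have hws : ∀ t ∈ us.map tag2, ∀ c ∈ t, tg c = false := by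
    intro t ht c hc
    simp only [List.mem_map] at ht
    obtain ⟨u, _, rfl⟩ := ht
    simp only [tag2, List.mem_map] at hc
    obtain ⟨x, _, rfl⟩ := hc
    simp [tg]
  have hmapmap : (us.map tag2).map (List.map Prod.fst) = us := by
    rw [List.map_map]
    have : (List.map Prod.fst) ∘ tag2 = id := by
      funext u; simp [tag2, Function.comp_def]
    rw [this, List.map_id]
  constructor
  · intro hw
    refine ⟨inter w, ?_, inter_mem_K0 w⟩
    rw [Shuffles_filter tg (tag1 w) hu (us.map tag2) hws]
    refine ⟨inter_filter1 w, ?_⟩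
    rw [inter_filter2]
    have := map_mem_Shuffles (fun x => (x, (1 : Fin 2))) us w hw
    exact this
  · rintro ⟨z, hz1, hz2⟩
    rw [Shuffles_filter tg (tag1 w) hu (us.map tag2) hws] at hz1
    obtain ⟨hf1, hf2⟩ := hz1
    have key := K0_fst hz2
    rw [hf1] at key
    have hw1 : (tag1 w).map Prod.fst = w := by simp [tag1, Function.comp_def]
    have := map_mem_Shuffles Prod.fst (us.map tag2) _ hf2
    rw [hmapmap, ← key, hw1] at this
    exact this

end CTS
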